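/- Let X ⊆ ℝᵏ be a closed convex set and let φ : ℝᵏ → ℝᵏ be a Lipschitz vector field. Then the following are equivalent: (i) every differentiable curve f : [0,T] → ℝᵏ (T > 0) solving the ODE f'(t) = φ(f(t)) with f(0) ∈ X satisfies f(t) ∈ X for all t ∈ [0,T]; (ii) for every z ∈ X and every linear functional l : ℝᵏ → ℝ such that l(x) ≤ l(z) for all x ∈ X, one has l(φ(z)) ≤ 0. (Condition (ii) says that at each boundary point z of X the vector φ(z) lies in the tangent cone of X at z, expressed via support functionals.) -/

import Mathlib

open Set Metric Filter
open scoped Topology RealInnerProductSpace NNReal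

/-- Nearest-point projection onto a closed convex set in Euclidean space,
together with the variational inequality. -/
lemma stmt5_proj {k : ℕ} (X : Set (EuclideanSpace ℝ (Fin k))) (hXc : IsClosed X)
    (hXconv : Convex ℝ X) (hne : X.Nonempty) (u : EuclideanSpace ℝ (Fin k)) :
    ∃ p ∈ X, Metric.infDist u X = dist u p ∧ (∀ w ∈ X, ⟪u - p, w - p⟫ ≤ 0) := by
  obtain ⟨p, hp, hdist⟩ := hXc.exists_infDist_eq_dist hne u
  refine ⟨p, hp, hdist, ?_⟩
  rw [← norm_eq_iInf_iff_real_inner_le_zero hXconv hp]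
  have : (⨅ w : X, ‖u - w‖) = Metric.infDist u X := by
    rw [Metric.infDist_eq_iInf]
    exact iInf_congr fun w => (dist_eq_norm u w).symm
  rw [this, hdist, dist_eq_norm]

theorem stmt5 (k : ℕ) (X : Set (EuclideanSpace ℝ (Fin k))) (hXc : IsClosed X)
    (hXconv : Convex ℝ X) (φ : EuclideanSpace ℝ (Fin k) → EuclideanSpace ℝ (Fin k))
    (K : NNReal) (hφ : LipschitzWith K φ) :
    (∀ T : ℝ, 0 < T → ∀ f : ℝ → EuclideanSpace ℝ (Fin k),
        (∀ t ∈ Set.Icc (0 : ℝ) T, HasDerivWithinAt f (φ (f t)) (Set.Icc (0 : ℝ) T) t) →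
        f 0 ∈ X → ∀ t ∈ Set.Icc (0 : ℝ) T, f t ∈ X) ↔
    (∀ z ∈ X, ∀ l : EuclideanSpace ℝ (Fin k) →ₗ[ℝ] ℝ,
        (∀ x ∈ X, l x ≤ l z) → l (φ z) ≤ 0) := by
  constructor
  · -- invariance → tangency
    intro h1 z hz l hl
    -- construct a local solution starting at z
    set C : ℝ := ‖φ z‖ + K with hC
    have hC0 : 0 ≤ C := by positivity
    set T : ℝ := (C + 1)⁻¹ with hT
    have hT0 : 0 < T := by rw [hT]; exact inv_pos.mpr (by linarith)
    have hpl : IsPicardLindelof (fun _ : ℝ => φ) (tmin := 0) (tmax := T)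
        ⟨0, ⟨le_refl 0, hT0.le⟩⟩ z 1 0 ⟨C, hC0⟩ K := by
      refine ⟨fun t _ => hφ.lipschitzOnWith, fun _ _ => continuousOn_const,
        ?_, ?_⟩
      · intro t _ x hx
        show ‖φ x‖ ≤ C
        have hb1 : ‖φ x - φ z‖ ≤ K * ‖x - z‖ := by
          simpa [dist_eq_norm] using hφ.dist_le_mul x z
        have hb2 : ‖x - z‖ ≤ 1 := by simpa [dist_eq_norm] using hx
        calc ‖φ x‖ = ‖φ z + (φ x - φ z)‖ := by congr 1; abel
          _ ≤ ‖φ z‖ + ‖φ x - φ z‖ := norm_add_le _ _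
          _ ≤ ‖φ z‖ + K := by
              have : ‖φ x - φ z‖ ≤ (K : ℝ) := by
                calc ‖φ x - φ z‖ ≤ K * ‖x - z‖ := hb1
                  _ ≤ K * 1 := by
                      exact mul_le_mul_of_nonneg_left hb2 (NNReal.coe_nonneg K)
                  _ = K := mul_one _
              linarith
          _ = C := hC.symm
      · rw [show ((1:ℝ≥0):ℝ) - ((0:ℝ≥0):ℝ) = 1 by simp]
        show C * max (T - 0) (0 - 0) ≤ 1
        have hmax : max (T - 0) (0 - 0) = T := by simp [hT0.le]
        rw [hmax, hT, ← div_eq_mul_inv, div_le_one (by linarith)]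
        linarith
    obtain ⟨f, hf0', hf⟩ := hpl.exists_eq_forall_mem_Icc_hasDerivWithinAt₀
    have hf0 : f 0 = z := hf0'
    have hmem : ∀ t ∈ Icc (0 : ℝ) T, f t ∈ X := h1 T hT0 f hf (hf0 ▸ hz)
    -- the composition l ∘ f has right derivative l (φ z) at 0
    have hl' : HasDerivWithinAt (fun t => l (f t)) (l (φ (f 0))) (Icc 0 T) 0 := by
      have := (LinearMap.toContinuousLinearMap l).hasFDerivAt.comp_hasDerivWithinAt 0
        (hf 0 ⟨le_refl 0, hT0.le⟩)
      exact this
    rw [hf0] at hl'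
    have hslope := hasDerivWithinAt_iff_tendsto_slope.mp hl'
    haveI hne : (𝓝[Icc (0:ℝ) T \ {0}] 0).NeBot := by
      rw [Set.Icc_diff_left]
      apply mem_closure_iff_nhdsWithin_neBot.mp
      rw [closure_Ioc hT0.ne]
      exact ⟨le_refl 0, hT0.le⟩
    refine le_of_tendsto hslope ?_
    filter_upwards [self_mem_nhdsWithin] with t ht
    rcases ht with ⟨htI, ht0⟩
    have ht0' : 0 < t := lt_of_le_of_ne htI.1 (Ne.symm (by simpa using ht0))
    have hsl : slope (fun t => l (f t)) 0 t = t⁻¹ * (l (f t) - l (f 0)) := by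
      simp [slope_def_field, div_eq_inv_mul]
    rw [hsl]
    have hle : l (f t) - l (f 0) ≤ 0 := by
      rw [hf0]
      exact sub_nonpos.mpr (hl _ (hmem t htI))
    exact mul_nonpos_of_nonneg_of_nonpos (inv_nonneg.mpr ht0'.le) hle
  · -- tangency → invariance
    intro h2 T hT f hf hf0
    have hXne : X.Nonempty := ⟨f 0, hf0⟩
    set g : ℝ → ℝ := fun t => (infDist (f t) X) ^ 2 with hg
    have hfc : ContinuousOn f (Icc 0 T) := fun t ht => (hf t ht).continuousWithinAt
    have hgc : ContinuousOn g (Icc 0 T) :=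
      ((continuous_infDist_pt X).comp_continuousOn hfc).pow 2
    have hg0 : g 0 = 0 := by
      simp only [hg]; simp [infDist_zero_of_mem hf0]
    have key : ∀ t ∈ Icc (0 : ℝ) T, g t ≤ gronwallBound 0 (2 * K) 0 (t - 0) := by
      apply le_gronwallBound_of_liminf_deriv_right_le hgc
        (f' := fun t => 2 * K * g t) ?_ hg0.le (fun x _ => by simp)
      intro x hx r hr
      have hr' : 2 * (K : ℝ) * g x < r := hr
      -- nearest point to f x
      obtain ⟨p, hp, hpd, hpvar⟩ := stmt5_proj X hXc hXconv hXne (f x)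
      have hgx : g x = ‖f x - p‖ ^ 2 := by simp only [hg]; rw [hpd, dist_eq_norm]
      -- tangency at p gives ⟪f x - p, φ p⟫ ≤ 0
      have htan : ⟪f x - p, φ p⟫ ≤ 0 := by
        have h := h2 p hp (innerSL ℝ (f x - p)).toLinearMap ?_
        · simpa only [ContinuousLinearMap.coe_coe, innerSL_apply_apply] using h
        · intro w hw
          have h' := hpvar w hw
          simp only [ContinuousLinearMap.coe_coe, innerSL_apply_apply]
          rw [inner_sub_right] at h'
          linarith
      have hinner : ⟪f x - p, φ (f x)⟫ ≤ K * g x := by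
        have hb1 : ⟪f x - p, φ (f x) - φ p⟫ ≤ ‖f x - p‖ * ‖φ (f x) - φ p‖ :=
          real_inner_le_norm _ _
        have hb2 : ‖φ (f x) - φ p‖ ≤ K * ‖f x - p‖ := by
          simpa [dist_eq_norm] using hφ.dist_le_mul (f x) p
        have hb3 : ⟪f x - p, φ (f x)⟫ = ⟪f x - p, φ p⟫ + ⟪f x - p, φ (f x) - φ p⟫ := by
          rw [← inner_add_right]
          congr 1
          abel
        rw [hb3, hgx]
        nlinarith [norm_nonneg (f x - p), NNReal.coe_nonneg K]
      -- slope of f tends to φ (f x) from the right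
      have hsub : 𝓝[>] x ≤ 𝓝[Icc (0:ℝ) T \ {x}] x := by
        rw [nhdsWithin_le_iff]
        have hmem : Ioc x T ∈ 𝓝[>] x := Ioc_mem_nhdsGT_of_mem ⟨le_refl x, hx.2⟩
        filter_upwards [hmem] with z hz
        exact ⟨⟨hx.1.trans hz.1.le, hz.2⟩, ne_of_gt hz.1⟩
      have hderiv := hasDerivWithinAt_iff_tendsto_slope.mp (hf x (Ico_subset_Icc_self hx))
      set s : ℝ → EuclideanSpace ℝ (Fin k) := fun z => (z - x)⁻¹ • (f z - f x) with hs
      have hslope : Tendsto s (𝓝[>] x) (𝓝 (φ (f x))) := by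
        refine (hderiv.mono_left hsub).congr' ?_
        filter_upwards [self_mem_nhdsWithin] with z hz
        simp [hs, slope_def_module]
      have hterm1 : Tendsto (fun z => ‖f z - f x‖ * ‖s z‖) (𝓝[>] x) (𝓝 0) := by
        have h1 : Tendsto (fun z => f z - f x) (𝓝[>] x) (𝓝 0) := by
          have h2' : Tendsto (fun z => (z - x) • s z) (𝓝[>] x) (𝓝 ((0:ℝ) • φ (f x))) := by
            refine Tendsto.smul ?_ hslope
            have h0 : Tendsto (fun z : ℝ => z - x) (𝓝 x) (𝓝 (x - x)) :=
              (continuous_id.sub continuous_const).tendsto x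
            rw [sub_self] at h0
            exact h0.mono_left nhdsWithin_le_nhds
          rw [zero_smul] at h2'
          refine h2'.congr' ?_
          filter_upwards [self_mem_nhdsWithin] with z (hz : x < z)
          rw [hs]
          simp only
          rw [smul_smul, mul_inv_cancel₀ (by linarith : z - x ≠ 0), one_smul]
        simpa using (h1.norm).mul (hslope.norm)
      have hterm2 : Tendsto (fun z => 2 * ⟪f x - p, s z⟫) (𝓝[>] x)
          (𝓝 (2 * ⟪f x - p, φ (f x)⟫)) :=
        (((continuous_const.inner continuous_id).tendsto (φ (f x))).comp hslope).const_mul 2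
      have hlim : Tendsto (fun z => ‖f z - f x‖ * ‖s z‖ + 2 * ⟪f x - p, s z⟫) (𝓝[>] x)
          (𝓝 (0 + 2 * ⟪f x - p, φ (f x)⟫)) := hterm1.add hterm2
      have hlt : (0 : ℝ) + 2 * ⟪f x - p, φ (f x)⟫ < r := by nlinarith
      have hev : ∀ᶠ z in 𝓝[>] x,
          ‖f z - f x‖ * ‖s z‖ + 2 * ⟪f x - p, s z⟫ < r :=
        hlim.eventually_lt_const hlt
      apply Filter.Eventually.frequently
      filter_upwards [hev, self_mem_nhdsWithin] with z hzlt (hz : x < z)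
      have hzx : 0 < z - x := by linarith
      have hgle : g z ≤ ‖f z - p‖ ^ 2 := by
        simp only [hg]
        have : infDist (f z) X ≤ ‖f z - p‖ := by
          rw [← dist_eq_norm]; exact infDist_le_dist_of_mem hp
        exact pow_le_pow_left₀ infDist_nonneg this 2
      have hexp : ‖f z - p‖ ^ 2 = ‖f z - f x‖ ^ 2 + 2 * ⟪f x - p, f z - f x⟫
          + ‖f x - p‖ ^ 2 := by
        have heq : f z - p = (f z - f x) + (f x - p) := by abel
        rw [heq, norm_add_sq_real, real_inner_comm]
        try ring
      have hineq : g z - g x ≤ ‖f z - f x‖ ^ 2 + 2 * ⟪f x - p, f z - f x⟫ := by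
        rw [hgx]; linarith
      calc (z - x)⁻¹ * (g z - g x)
          ≤ (z - x)⁻¹ * (‖f z - f x‖ ^ 2 + 2 * ⟪f x - p, f z - f x⟫) :=
            mul_le_mul_of_nonneg_left hineq (inv_nonneg.mpr hzx.le)
        _ = ‖f z - f x‖ * ‖s z‖ + 2 * ⟪f x - p, s z⟫ := by
            rw [hs]
            simp only [norm_smul, inner_smul_right, Real.norm_eq_abs,
              abs_of_pos (inv_pos.mpr hzx)]
            ring
        _ < r := hzlt
    intro t ht
    have hle := key t ht
    rw [gronwallBound_ε0_δ0] at hle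
    have hge : 0 ≤ g t := by simp only [hg]; positivity
    have heq : g t = 0 := le_antisymm hle hge
    have hid : infDist (f t) X = 0 := by
      simp only [hg] at heq
      exact pow_eq_zero_iff (by norm_num) |>.mp heq
    exact (hXc.mem_iff_infDist_zero hXne).mpr hid
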